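/- Let R be an E-matrix indexed by (Fin m × Fin m) × (Fin m × Fin m) and let μ : Fin m → E satisfy the enhancement condition (8a): μ(i₁)·μ(i₂)·R((i₁,i₂),(j₁,j₂)) = R((i₁,i₂),(j₁,j₂))·μ(j₁)·μ(j₂) for all i₁, i₂, j₁, j₂ (i.e. μ⊗μ commutes with R). Then for every n ≥ 2 and every i with i+1 < n, the diagonal matrix D^n(μ) commutes with A_i^n(R); consequently, if ρ : B_n → GL of the matrix ring indexed by (Fin n → Fin m) is a group homomorphism with ρ(σ_i) = A_{i−1}^n(R) for all i, then D^n(μ) commutes with ρ(β) for every β ∈ B_n, and trace(ρ(αβ)·D^n(μ)) = trace(ρ(βα)·D^n(μ)) for all α, β ∈ B_n (invariance of the enhanced trace under conjugation, Markov's first move). -/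

import Mathlib

/-- Relators for the braid group: far commutation and the braid relations. -/
def braidRels (m : ℕ) : Set (FreeGroup (Fin m)) :=
  {r | ∃ i j : Fin m, ((i : ℕ) + 2 ≤ (j : ℕ) ∨ (j : ℕ) + 2 ≤ (i : ℕ)) ∧
        r = FreeGroup.of i * FreeGroup.of j * (FreeGroup.of j * FreeGroup.of i)⁻¹} ∪
  {r | ∃ i j : Fin m, ((j : ℕ) = (i : ℕ) + 1 ∨ (i : ℕ) = (j : ℕ) + 1) ∧
        r = FreeGroup.of i * FreeGroup.of j * FreeGroup.of i *
            (FreeGroup.of j * FreeGroup.of i * FreeGroup.of j)⁻¹}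

/-- The braid group `B_n`, presented on generators `σ_1, …, σ_{n-1}`. -/
def BraidGroup (n : ℕ) : Type := PresentedGroup (braidRels (n - 1))

instance (n : ℕ) : Group (BraidGroup n) :=
  inferInstanceAs (Group (PresentedGroup (braidRels (n - 1))))

/-- The generator `σ_{i+1}` of the braid group `B_n`. -/
def braidGen {n : ℕ} (i : Fin (n - 1)) : BraidGroup n := PresentedGroup.of i

/-- The matrix of `id^{⊗ i} ⊗ R ⊗ id^{⊗ (n-i-2)}` acting on the `n`-th tensor
power of the free module `E^m`. -/
def Amat {E : Type*} [CommRing E] (m n : ℕ)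
    (R : Matrix (Fin m × Fin m) (Fin m × Fin m) E) (i : ℕ) (hi : i + 1 < n) :
    Matrix (Fin n → Fin m) (Fin n → Fin m) E :=
  fun f g =>
    R (f ⟨i, Nat.lt_of_succ_lt hi⟩, f ⟨i + 1, hi⟩)
      (g ⟨i, Nat.lt_of_succ_lt hi⟩, g ⟨i + 1, hi⟩) *
    ∏ k ∈ Finset.univ.filter
        (fun k : Fin n => k ≠ ⟨i, Nat.lt_of_succ_lt hi⟩ ∧ k ≠ ⟨i + 1, hi⟩),
      (if f k = g k then 1 else 0)

/-- The `n`-th Kronecker power of the diagonal matrix with entries `μ`. -/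
def Dmat {E : Type*} [CommRing E] (m n : ℕ) (μ : Fin m → E) :
    Matrix (Fin n → Fin m) (Fin n → Fin m) E :=
  Matrix.diagonal fun f => ∏ k, μ (f k)


theorem Dmat_comm_Amat {E : Type*} [CommRing E] (m n : ℕ)
    (R : Matrix (Fin m × Fin m) (Fin m × Fin m) E) (μ : Fin m → E)
    (h8a : ∀ i₁ i₂ j₁ j₂ : Fin m,
      μ i₁ * μ i₂ * R (i₁, i₂) (j₁, j₂) = R (i₁, i₂) (j₁, j₂) * μ j₁ * μ j₂)
    (i : ℕ) (hi : i + 1 < n) :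
    Dmat m n μ * Amat m n R i hi = Amat m n R i hi * Dmat m n μ := by
  ext f g
  rw [Dmat, Matrix.diagonal_mul, Matrix.mul_diagonal]
  set i0 : Fin n := ⟨i, Nat.lt_of_succ_lt hi⟩ with hi0
  set i1 : Fin n := ⟨i + 1, hi⟩ with hi1
  have h01 : i0 ≠ i1 := by simp [hi0, hi1, Fin.ext_iff]
  set s : Finset (Fin n) := Finset.univ.filter (fun k => k ≠ i0 ∧ k ≠ i1) with hs
  by_cases hfg : ∀ k ∈ s, f k = g k
  · have hP : (∏ k ∈ s, (if f k = g k then (1:E) else 0)) = 1 :=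
      Finset.prod_eq_one fun k hk => if_pos (hfg k hk)
    have hrest : (∏ k ∈ s, μ (f k)) = ∏ k ∈ s, μ (g k) :=
      Finset.prod_congr rfl fun k hk => by rw [hfg k hk]
    have hsplit : ∀ h : Fin n → Fin m,
        (∏ k, μ (h k)) = μ (h i0) * μ (h i1) * ∏ k ∈ s, μ (h k) := by
      intro h
      have : Finset.univ.filter (fun k : Fin n => ¬(k ≠ i0 ∧ k ≠ i1)) = {i0, i1} := by
        ext k; simp; tauto
      rw [← Finset.prod_filter_mul_prod_filter_not Finset.univ
        (fun k : Fin n => ¬(k ≠ i0 ∧ k ≠ i1)) (fun k => μ (h k)), this,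
        Finset.prod_pair h01]
      simp [hs]
    show (∏ k, μ (f k)) * Amat m n R i hi f g = Amat m n R i hi f g * ∏ k, μ (g k)
    rw [Amat]
    show (∏ k, μ (f k)) * (R (f i0, f i1) (g i0, g i1) * ∏ k ∈ s, _) = _
    rw [hP, hsplit f, hsplit g, hrest, mul_one]
    linear_combination (∏ k ∈ s, μ (g k)) * h8a (f i0) (f i1) (g i0) (g i1)
  · push_neg at hfg
    obtain ⟨k, hk, hne⟩ := hfg
    have hP : (∏ k ∈ s, (if f k = g k then (1:E) else 0)) = 0 :=
      Finset.prod_eq_zero hk (if_neg hne)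
    show (∏ k, μ (f k)) * Amat m n R i hi f g = Amat m n R i hi f g * ∏ k, μ (g k)
    rw [Amat]
    show (∏ k, μ (f k)) * (R (f i0, f i1) (g i0, g i1) * ∏ k ∈ s, _) = _
    rw [hP]
    ring

/-- If `μ ⊗ μ` commutes with `R` (enhancement condition (8a)), then `D^n(μ)`
commutes with each `A_i^n(R)`; consequently it commutes with the image of any
R-matrix representation of the braid group, and the enhanced trace
`β ↦ trace(ρ(β)·D^n(μ))` is invariant under conjugation. -/
theorem enhanced_trace_conjugation_invariant {E : Type*} [CommRing E]
    (m : ℕ) (hm : 1 ≤ m)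
    (R : Matrix (Fin m × Fin m) (Fin m × Fin m) E) (μ : Fin m → E)
    (h8a : ∀ i₁ i₂ j₁ j₂ : Fin m,
      μ i₁ * μ i₂ * R (i₁, i₂) (j₁, j₂) = R (i₁, i₂) (j₁, j₂) * μ j₁ * μ j₂) :
    (∀ n : ℕ, 2 ≤ n → ∀ i : ℕ, ∀ hi : i + 1 < n,
        Dmat m n μ * Amat m n R i hi = Amat m n R i hi * Dmat m n μ) ∧
    (∀ n : ℕ, 2 ≤ n →
      ∀ ρ : BraidGroup n →* (Matrix (Fin n → Fin m) (Fin n → Fin m) E)ˣ,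
        (∀ i : Fin (n - 1),
            ((ρ (braidGen i) : (Matrix (Fin n → Fin m) (Fin n → Fin m) E)ˣ) :
                Matrix (Fin n → Fin m) (Fin n → Fin m) E) =
              Amat m n R (i : ℕ) (by have := i.isLt; omega)) →
        (∀ β : BraidGroup n,
            Dmat m n μ * (ρ β : Matrix (Fin n → Fin m) (Fin n → Fin m) E) =
            (ρ β : Matrix (Fin n → Fin m) (Fin n → Fin m) E) * Dmat m n μ) ∧
        (∀ α β : BraidGroup n,
            Matrix.trace ((ρ (α * β) : Matrix (Fin n → Fin m) (Fin n → Fin m) E) * Dmat m n μ) =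
            Matrix.trace ((ρ (β * α) : Matrix (Fin n → Fin m) (Fin n → Fin m) E) * Dmat m n μ))) := by
  refine ⟨fun n _ i hi => Dmat_comm_Amat m n R μ h8a i hi, ?_⟩
  intro n hn ρ hρ
  have hcomm : ∀ β : BraidGroup n,
      Commute (Dmat m n μ) ((ρ β : (Matrix (Fin n → Fin m) (Fin n → Fin m) E)ˣ) :
        Matrix (Fin n → Fin m) (Fin n → Fin m) E) := by
    intro β
    have hβ : β ∈ Subgroup.closure
        (Set.range (PresentedGroup.of : Fin (n - 1) → PresentedGroup (braidRels (n - 1)))) := by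
      rw [PresentedGroup.closure_range_of]; trivial
    induction hβ using Subgroup.closure_induction with
    | mem x hx =>
        obtain ⟨i, rfl⟩ := hx
        show Commute (Dmat m n μ) ((ρ (braidGen i) : _ˣ) : Matrix _ _ E)
        rw [hρ i]
        exact Dmat_comm_Amat m n R μ h8a i (by have := i.isLt; omega)
    | one =>
        have h1 : ρ 1 = 1 := map_one ρ
        erw [h1]
        simp [Commute, SemiconjBy]
    | mul x y hx hy ihx ihy =>
        have : ρ (x * y) = ρ x * ρ y := map_mul ρ x y
        erw [this]
        rw [Units.val_mul]
        exact ihx.mul_right ihy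
    | inv x hx ihx =>
        have : ρ x⁻¹ = (ρ x)⁻¹ := map_inv ρ x
        erw [this]
        exact ihx.units_inv_right
  refine ⟨fun β => hcomm β, fun α β => ?_⟩
  have hmul : ∀ a b : BraidGroup n, ((ρ (a * b) : _ˣ) : Matrix (Fin n → Fin m) (Fin n → Fin m) E)
      = ((ρ a : _ˣ) : Matrix _ _ E) * ((ρ b : _ˣ) : Matrix _ _ E) := by
    intro a b; rw [map_mul, Units.val_mul]
  rw [hmul, hmul, mul_assoc, Matrix.trace_mul_comm, mul_assoc, (hcomm α).eq, ← mul_assoc]
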